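/- Face areas of a null-faced 4-parallelotope from scalar products of volume normals: let a, b, c, d be a basis of ℝ⁴, M the matrix with columns a, b, c, d, and for each i let ℓᵢ ∈ ℝ⁴ satisfy η(ℓᵢ, v) = det(M with i-th column replaced by v) for all v. If η(ℓ₁,ℓ₁) = 0 and η(ℓ₂,ℓ₂) = 0 (the corresponding two hyperfaces are null), then η(ℓ₁,ℓ₂)² = (det M)² · (η(c,c)η(d,d) − η(c,d)²). In words, |η(ℓ₁,ℓ₂)| equals the spacetime volume Ω = |det M| times the area of the parallelogram face spanned by c and d at which the two hyperfaces intersect. -/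

import Mathlib

/-- The Minkowski bilinear form on `ℝ⁴` with signature `(-,+,+,+)`. -/
def eta (x y : Fin 4 → ℝ) : ℝ :=
  -(x 0 * y 0) + x 1 * y 1 + x 2 * y 2 + x 3 * y 3

/-- The 4×4 matrix whose columns are the vectors `e 0, e 1, e 2, e 3`. -/
def cols (e : Fin 4 → Fin 4 → ℝ) : Matrix (Fin 4) (Fin 4) ℝ :=
  Matrix.of fun i j => e j i

theorem my_det_fin_four (A : Matrix (Fin 4) (Fin 4) ℝ) : A.det =
  A 0 0*A 1 1*A 2 2*A 3 3 - A 0 0*A 1 1*A 2 3*A 3 2 - A 0 0*A 1 2*A 2 1*A 3 3 + A 0 0*A 1 2*A 2 3*A 3 1 + A 0 0*A 1 3*A 2 1*A 3 2 - A 0 0*A 1 3*A 2 2*A 3 1 - A 0 1*A 1 0*A 2 2*A 3 3 + A 0 1*A 1 0*A 2 3*A 3 2 + A 0 1*A 1 2*A 2 0*A 3 3 - A 0 1*A 1 2*A 2 3*A 3 0 - A 0 1*A 1 3*A 2 0*A 3 2 + A 0 1*A 1 3*A 2 2*A 3 0 + A 0 2*A 1 0*A 2 1*A 3 3 - A 0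 2*A 1 0*A 2 3*A 3 1 - A 0 2*A 1 1*A 2 0*A 3 3 + A 0 2*A 1 1*A 2 3*A 3 0 + A 0 2*A 1 3*A 2 0*A 3 1 - A 0 2*A 1 3*A 2 1*A 3 0 - A 0 3*A 1 0*A 2 1*A 3 2 + A 0 3*A 1 0*A 2 2*A 3 1 + A 0 3*A 1 1*A 2 0*A 3 2 - A 0 3*A 1 1*A 2 2*A 3 0 - A 0 3*A 1 2*A 2 0*A 3 1 + A 0 3*A 1 2*A 2 1*A 3 0 := by
  simp [Matrix.det_succ_row_zero, Fin.sum_univ_succ, Fin.succAbove, show (2:Fin 3).succ = 3 from rfl, show ((2:Fin 3).succ:Fin 4) = 3 from rfl, show ((Fin.castSucc 2):Fin 4) = 2 from rfl]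
  ring

theorem nullFaced_parallelotope_face_area (a b c d : Fin 4 → ℝ)
    (hbasis : LinearIndependent ℝ ![a, b, c, d])
    (ℓ : Fin 4 → Fin 4 → ℝ)
    (hℓ : ∀ i v, eta (ℓ i) v = ((cols ![a, b, c, d]).updateCol i v).det)
    (h1 : eta (ℓ 0) (ℓ 0) = 0) (h2 : eta (ℓ 1) (ℓ 1) = 0) :
    eta (ℓ 0) (ℓ 1) ^ 2 =
      (cols ![a, b, c, d]).det ^ 2 * (eta c c * eta d d - eta c d ^ 2) ∧
    |eta (ℓ 0) (ℓ 1)| =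
      |(cols ![a, b, c, d]).det| * Real.sqrt (eta c c * eta d d - eta c d ^ 2) := by
  have h00 : ℓ 0 0 = -(b 1 * c 2 * d 3 - b 1 * d 2 * c 3 - c 1 * b 2 * d 3 + c 1 * d 2 * b 3 + d 1 * b 2 * c 3 - d 1 * c 2 * b 3) := by
    have h := hℓ 0 (Pi.single 0 1)
    rw [my_det_fin_four] at h
    simp [eta, cols, Matrix.updateCol_apply, Pi.single_apply] at h
    linarith
  have h01 : ℓ 0 1 = -(b 0 * c 2 * d 3 - b 0 * d 2 * c 3 - c 0 * b 2 * d 3 + c 0 * d 2 * b 3 + d 0 * b 2 * c 3 - d 0 * c 2 * b 3) := by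
    have h := hℓ 0 (Pi.single 1 1)
    rw [my_det_fin_four] at h
    simp [eta, cols, Matrix.updateCol_apply, Pi.single_apply] at h
    linarith
  have h02 : ℓ 0 2 = (b 0 * c 1 * d 3 - b 0 * d 1 * c 3 - c 0 * b 1 * d 3 + c 0 * d 1 * b 3 + d 0 * b 1 * c 3 - d 0 * c 1 * b 3) := by
    have h := hℓ 0 (Pi.single 2 1)
    rw [my_det_fin_four] at h
    simp [eta, cols, Matrix.updateCol_apply, Pi.single_apply] at h
    linarith
  have h03 : ℓ 0 3 = -(b 0 * c 1 * d 2 - b 0 * d 1 * c 2 - c 0 * b 1 * d 2 + c 0 * d 1 * b 2 + d 0 * b 1 * c 2 - d 0 * c 1 * b 2) := by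
    have h := hℓ 0 (Pi.single 3 1)
    rw [my_det_fin_four] at h
    simp [eta, cols, Matrix.updateCol_apply, Pi.single_apply] at h
    linarith
  have h10 : ℓ 1 0 = (a 1 * c 2 * d 3 - a 1 * d 2 * c 3 - c 1 * a 2 * d 3 + c 1 * d 2 * a 3 + d 1 * a 2 * c 3 - d 1 * c 2 * a 3) := by
    have h := hℓ 1 (Pi.single 0 1)
    rw [my_det_fin_four] at h
    simp [eta, cols, Matrix.updateCol_apply, Pi.single_apply] at h
    linarith
  have h11 : ℓ 1 1 = (a 0 * c 2 * d 3 - a 0 * d 2 * c 3 - c 0 * a 2 * d 3 + c 0 * d 2 * a 3 + d 0 * a 2 * c 3 - d 0 * c 2 * a 3) := by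
    have h := hℓ 1 (Pi.single 1 1)
    rw [my_det_fin_four] at h
    simp [eta, cols, Matrix.updateCol_apply, Pi.single_apply] at h
    linarith
  have h12 : ℓ 1 2 = -(a 0 * c 1 * d 3 - a 0 * d 1 * c 3 - c 0 * a 1 * d 3 + c 0 * d 1 * a 3 + d 0 * a 1 * c 3 - d 0 * c 1 * a 3) := by
    have h := hℓ 1 (Pi.single 2 1)
    rw [my_det_fin_four] at h
    simp [eta, cols, Matrix.updateCol_apply, Pi.single_apply] at h
    linarith
  have h13 : ℓ 1 3 = (a 0 * c 1 * d 2 - a 0 * d 1 * c 2 - c 0 * a 1 * d 2 + c 0 * d 1 * a 2 + d 0 * a 1 * c 2 - d 0 * c 1 * a 2) := by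
    have h := hℓ 1 (Pi.single 3 1)
    rw [my_det_fin_four] at h
    simp [eta, cols, Matrix.updateCol_apply, Pi.single_apply] at h
    linarith
  have hA : eta (ℓ 0) (ℓ 0) = -(eta b b * eta c c * eta d d - eta b b * eta c d * eta c d - eta b c * eta b c * eta d d + eta b c * eta c d * eta b d + eta b d * eta b c * eta c d - eta b d * eta c c * eta b d) := by
    simp only [eta]; rw [h00, h01, h02, h03]; ring
  have hC : eta (ℓ 1) (ℓ 1) = -(eta a a * eta c c * eta d d - eta a a * eta c d * eta c d - eta a c * eta a c * eta d d + eta a c * eta c d * eta a d + eta a d * eta a c * eta c d - eta a d * eta c c * eta a d) := by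
    simp only [eta]; rw [h10, h11, h12, h13]; ring
  have hB : eta (ℓ 0) (ℓ 1) = -((-1)*(eta a b * eta c c * eta d d - eta a b * eta c d * eta c d - eta b c * eta a c * eta d d + eta b c * eta c d * eta a d + eta b d * eta a c * eta c d - eta b d * eta c c * eta a d)) := by
    simp only [eta]; rw [h00, h01, h02, h03, h10, h11, h12, h13]; ring
  have hdet : (cols ![a, b, c, d]).det ^ 2 = -(eta a a * eta b b * eta c c * eta d d - eta a a * eta b b * eta c d * eta c d - eta a a * eta b c * eta b c * eta d d + eta a a * eta b c * eta c d * eta b d + eta a a * eta b d * eta b c * eta c d - eta a a * eta b d * eta c c * eta b d - eta a b * eta a b * eta c c * eta d d + eta a b * eta a b * eta c d * eta c d + eta a b * eta b c * eta a c * eta d d - eta a b * eta b c * eta c d * eta a d - eta a b * eta b d * eta a c * eta c d + eta a b * eta b d * eta c c * eta a d + eta a c * eta a b * eta b c * eta d d - eta a c * eta a b * eta c d * eta b d - eta a c * eta b b * eta a c * eta d d + eta a c * eta b b * eta c d * eta a d + eta a c * eta b d * eta a c * eta b d - eta a c * eta b d * eta b c * eta a d - eta a d * eta a b * eta b c * eta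 c d + eta a d * eta a b * eta c c * eta b d + eta a d * eta b b * eta a c * eta c d - eta a d * eta b b * eta c c * eta a d - eta a d * eta b c * eta a c * eta b d + eta a d * eta b c * eta b c * eta a d) := by
    rw [my_det_fin_four]; simp [eta, cols]; ring
  have hC00 : (eta b b * eta c c * eta d d - eta b b * eta c d * eta c d - eta b c * eta b c * eta d d + eta b c * eta c d * eta b d + eta b d * eta b c * eta c d - eta b d * eta c c * eta b d) = 0 := by linarith
  have hC11 : (eta a a * eta c c * eta d d - eta a a * eta c d * eta c d - eta a c * eta a c * eta d d + eta a c * eta c d * eta a d + eta a d * eta a c * eta c d - eta a d * eta c c * eta a d) = 0 := by linarith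
  have part1 : eta (ℓ 0) (ℓ 1) ^ 2 =
      (cols ![a, b, c, d]).det ^ 2 * (eta c c * eta d d - eta c d ^ 2) := by
    rw [hB, hdet]
    linear_combination ((eta b b * eta c c * eta d d - eta b b * eta c d * eta c d - eta b c * eta b c * eta d d + eta b c * eta c d * eta b d + eta b d * eta b c * eta c d - eta b d * eta c c * eta b d)) * hC11
  refine ⟨part1, ?_⟩
  rw [← Real.sqrt_sq_eq_abs, part1, Real.sqrt_mul (sq_nonneg _), Real.sqrt_sq_eq_abs]
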